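/- arXiv:2001.03718 — 4 statements merged into one kernel-verified Lean document; each statement's English description precedes it below -/
import Mathlib

section
/- For all x, y in (-2,2) and ρ in [0,1), the kernel K_ρ(x,y) = (1-ρ²) / (ρ²(x-y)² - xyρ(1-ρ)² + (1-ρ²)²) is strictly positive; in particular the denominator ρ²(x-y)² - xyρ(1-ρ)² + (1-ρ²)² never vanishes on (-2,2)². -/
/-- For `x, y ∈ (-2,2)` and `ρ ∈ [0,1)`, the kernel
`K_ρ(x,y) = (1-ρ²)/(ρ²(x-y)² - xyρ(1-ρ)² + (1-ρ²)²)` is strictly positive; in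
particular the denominator never vanishes on `(-2,2)²`. -/
theorem stmt2 (x y ρ : ℝ) (hx : x ∈ Set.Ioo (-2 : ℝ) 2) (hy : y ∈ Set.Ioo (-2 : ℝ) 2)
    (hρ : ρ ∈ Set.Ico (0 : ℝ) 1) :
    ρ ^ 2 * (x - y) ^ 2 - x * y * ρ * (1 - ρ) ^ 2 + (1 - ρ ^ 2) ^ 2 ≠ 0 ∧
      0 < (1 - ρ ^ 2) / (ρ ^ 2 * (x - y) ^ 2 - x * y * ρ * (1 - ρ) ^ 2 + (1 - ρ ^ 2) ^ 2) := by
  obtain ⟨hx1, hx2⟩ := hx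
  obtain ⟨hy1, hy2⟩ := hy
  obtain ⟨hρ0, hρ1⟩ := hρ
  have hxy : x * y < 4 := by nlinarith
  have hD : 0 < ρ ^ 2 * (x - y) ^ 2 - x * y * ρ * (1 - ρ) ^ 2 + (1 - ρ ^ 2) ^ 2 := by
    nlinarith [mul_nonneg (sq_nonneg ρ) (sq_nonneg (x - y)),
      pow_pos (by linarith : (0:ℝ) < 1 - ρ) 4,
      mul_nonneg (mul_nonneg hρ0 (by linarith : (0:ℝ) ≤ 4 - x * y)) (sq_nonneg (1 - ρ))]
  have hN : 0 < 1 - ρ ^ 2 := by nlinarith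
  exact ⟨ne_of_gt hD, div_pos hN hD⟩
end

section
/- For x, y in (-1,1) and ρ in [0,1), setting a = x + i√(1-x²) and b = y + i√(1-y²), one has Σ_{q=0}^∞ \tilde{U}_q(x)\tilde{U}_q(y)ρ^q = (1-ρ²) / (4ρ²(x²+y²) - 4xyρ(1+ρ²) + 1 - 2ρ² + ρ⁴). -/
/-- `Ut q` : the `q`-th Chebyshev polynomial of the second kind on `[-1,1]`,
characterized by `Ut q (cos θ) = sin ((q+1) θ) / sin θ`. -/
noncomputable def Ut (q : ℕ) (x : ℝ) : ℝ := (Polynomial.Chebyshev.U ℝ (q : ℤ)).eval x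


lemma Ut_zero (x : ℝ) : Ut 0 x = 1 := by simp [Ut, Polynomial.Chebyshev.U_zero]
lemma Ut_one (x : ℝ) : Ut 1 x = 2 * x := by simp [Ut, Polynomial.Chebyshev.U_one]
lemma Ut_rec (q : ℕ) (x : ℝ) : Ut (q + 2) x = 2 * x * Ut (q + 1) x - Ut q x := by
  have h := Polynomial.Chebyshev.U_add_two ℝ (q : ℤ)
  simp only [Ut]
  push_cast
  rw [h]
  simp

-- key: (Ut q x : ℂ) * (a - a') = a^(q+1) - a'^(q+1), where a = x + s*I, a' = x - s*I,
-- provided s^2 = 1 - x^2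
lemma Ut_complex (x s : ℝ) (hs : (s:ℝ)^2 = 1 - x^2) (q : ℕ) :
    (Ut q x : ℂ) * ((x + s*Complex.I) - (x - s*Complex.I))
      = (x + s*Complex.I)^(q+1) - (x - s*Complex.I)^(q+1) := by
  set a : ℂ := x + s*Complex.I
  set a' : ℂ := x - s*Complex.I
  have hsum : a + a' = 2 * x := by simp [a, a']; ring
  have hprod : a * a' = 1 := by
    have : (s:ℂ)^2 = 1 - (x:ℂ)^2 := by exact_mod_cast congrArg Complex.ofReal hs
    simp only [a, a']
    linear_combination this - (s:ℂ)^2 * Complex.I_sq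
  induction q using Nat.twoStepInduction with
  | zero => simp [Ut_zero]
  | one =>
    rw [Ut_one]
    push_cast
    linear_combination (-(a - a')) * hsum
  | more q ih1 ih2 =>
    rw [Ut_rec]
    push_cast
    have e1 : a^(q+1+1+1) - a'^(q+1+1+1)
        = (a + a') * (a^(q+1+1) - a'^(q+1+1)) - (a*a') * (a^(q+1) - a'^(q+1)) := by ring
    rw [e1, hsum, hprod, ← ih1, ← ih2]
    ring

set_option maxHeartbeats 2000000 in
lemma key (a b ρ : ℂ) (ha : a ≠ 0) (hb : b ≠ 0)
    (h1 : 1 - ρ*(a*b) ≠ 0) (h2 : 1 - ρ*(a*b⁻¹) ≠ 0) (h3 : 1 - ρ*(a⁻¹*b) ≠ 0)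
    (h4 : 1 - ρ*(a⁻¹*b⁻¹) ≠ 0) (hCa : a - a⁻¹ ≠ 0) (hCb : b - b⁻¹ ≠ 0) :
    (a*b*(1-ρ*(a*b))⁻¹ - a*b⁻¹*(1-ρ*(a*b⁻¹))⁻¹ - a⁻¹*b*(1-ρ*(a⁻¹*b))⁻¹
        + a⁻¹*b⁻¹*(1-ρ*(a⁻¹*b⁻¹))⁻¹) / ((a-a⁻¹)*(b-b⁻¹))
      = (1-ρ^2) / ((1-ρ*(a*b))*(1-ρ*(a*b⁻¹))*(1-ρ*(a⁻¹*b))*(1-ρ*(a⁻¹*b⁻¹))) := by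
  have h2' : b - ρ*a ≠ 0 := by
    have e : b - ρ*a = b*(1 - ρ*(a*b⁻¹)) := by field_simp
    rw [e]; exact mul_ne_zero hb h2
  have h3' : a - ρ*b ≠ 0 := by
    have e : a - ρ*b = a*(1 - ρ*(a⁻¹*b)) := by field_simp
    rw [e]; exact mul_ne_zero ha h3
  have h4' : a*b - ρ ≠ 0 := by
    have e : a*b - ρ = (a*b)*(1 - ρ*(a⁻¹*b⁻¹)) := by field_simp
    rw [e]; exact mul_ne_zero (mul_ne_zero ha hb) h4
  rw [div_eq_div_iff (mul_ne_zero hCa hCb)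
    (by exact mul_ne_zero (mul_ne_zero (mul_ne_zero h1 h2) h3) h4)]
  have i1 := mul_inv_cancel₀ h1
  have i2 := mul_inv_cancel₀ h2
  have i3 := mul_inv_cancel₀ h3
  have i4 := mul_inv_cancel₀ h4
  have hP : a*b*((1-ρ*(a*b⁻¹))*(1-ρ*(a⁻¹*b))*(1-ρ*(a⁻¹*b⁻¹)))
      - a*b⁻¹*((1-ρ*(a*b))*(1-ρ*(a⁻¹*b))*(1-ρ*(a⁻¹*b⁻¹)))
      - a⁻¹*b*((1-ρ*(a*b))*(1-ρ*(a*b⁻¹))*(1-ρ*(a⁻¹*b⁻¹)))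
      + a⁻¹*b⁻¹*((1-ρ*(a*b))*(1-ρ*(a*b⁻¹))*(1-ρ*(a⁻¹*b)))
      = (1-ρ^2)*((a-a⁻¹)*(b-b⁻¹)) := by
    field_simp
    ring
  linear_combination hP
    + a*b*((1-ρ*(a*b⁻¹))*(1-ρ*(a⁻¹*b))*(1-ρ*(a⁻¹*b⁻¹))) * i1
    - a*b⁻¹*((1-ρ*(a*b))*(1-ρ*(a⁻¹*b))*(1-ρ*(a⁻¹*b⁻¹))) * i2
    - a⁻¹*b*((1-ρ*(a*b))*(1-ρ*(a*b⁻¹))*(1-ρ*(a⁻¹*b⁻¹))) * i3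
    + a⁻¹*b⁻¹*((1-ρ*(a*b))*(1-ρ*(a*b⁻¹))*(1-ρ*(a⁻¹*b))) * i4


set_option maxHeartbeats 4000000 in
/-- For `x, y ∈ (-1,1)` and `ρ ∈ [0,1)`,
`∑_{q≥0} Ũ_q(x) Ũ_q(y) ρ^q = (1-ρ²)/(4ρ²(x²+y²) - 4xyρ(1+ρ²) + 1 - 2ρ² + ρ⁴)`. -/
theorem stmt5 (x y ρ : ℝ) (hx : x ∈ Set.Ioo (-1 : ℝ) 1) (hy : y ∈ Set.Ioo (-1 : ℝ) 1)
    (hρ : ρ ∈ Set.Ico (0 : ℝ) 1) :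
    HasSum (fun q : ℕ => Ut q x * Ut q y * ρ ^ q)
      ((1 - ρ ^ 2) /
        (4 * ρ ^ 2 * (x ^ 2 + y ^ 2) - 4 * x * y * ρ * (1 + ρ ^ 2) + 1 - 2 * ρ ^ 2 + ρ ^ 4)) := by
  obtain ⟨hx1, hx2⟩ := hx
  obtain ⟨hy1, hy2⟩ := hy
  obtain ⟨hρ0, hρ1⟩ := hρ
  set s : ℝ := Real.sqrt (1 - x^2) with hs_def
  set t : ℝ := Real.sqrt (1 - y^2) with ht_def
  have hx2' : 1 - x^2 > 0 := by nlinarith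
  have hy2' : 1 - y^2 > 0 := by nlinarith
  have hs2 : s^2 = 1 - x^2 := Real.sq_sqrt hx2'.le
  have ht2 : t^2 = 1 - y^2 := Real.sq_sqrt hy2'.le
  have hs_pos : 0 < s := Real.sqrt_pos.mpr hx2'
  have ht_pos : 0 < t := Real.sqrt_pos.mpr hy2'
  set a : ℂ := (x:ℂ) + s*Complex.I with ha_def
  set a' : ℂ := (x:ℂ) - s*Complex.I with ha'_def
  set b : ℂ := (y:ℂ) + t*Complex.I with hb_def
  set b' : ℂ := (y:ℂ) - t*Complex.I with hb'_def
  have hpa : a * a' = 1 := by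
    have hc : (s:ℂ)^2 = 1 - (x:ℂ)^2 := by exact_mod_cast congrArg Complex.ofReal hs2
    simp only [a, a']; linear_combination hc - (s:ℂ)^2 * Complex.I_sq
  have hpb : b * b' = 1 := by
    have hc : (t:ℂ)^2 = 1 - (y:ℂ)^2 := by exact_mod_cast congrArg Complex.ofReal ht2
    simp only [b, b']; linear_combination hc - (t:ℂ)^2 * Complex.I_sq
  have ha0 : a ≠ 0 := left_ne_zero_of_mul_eq_one hpa
  have hb0 : b ≠ 0 := left_ne_zero_of_mul_eq_one hpb
  have ha' : a' = a⁻¹ := eq_inv_of_mul_eq_one_left (by linear_combination hpa)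
  have hb' : b' = b⁻¹ := eq_inv_of_mul_eq_one_left (by linear_combination hpb)
  -- norms
  have hna : ‖a‖ = 1 := by
    have hconj : (starRingEnd ℂ) a = a' := by
      simp only [a, a', map_add, map_mul, Complex.conj_ofReal, Complex.conj_I]
      ring
    have h1 : ‖a‖ * ‖a‖ = 1 := by
      have := congrArg norm hpa
      rwa [norm_mul, ← hconj, Complex.norm_conj, norm_one] at this
    nlinarith [norm_nonneg a]
  have hnb : ‖b‖ = 1 := by
    have hconj : (starRingEnd ℂ) b = b' := by
      simp only [b, b', map_add, map_mul, Complex.conj_ofReal, Complex.conj_I]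
      ring
    have h1 : ‖b‖ * ‖b‖ = 1 := by
      have := congrArg norm hpb
      rwa [norm_mul, ← hconj, Complex.norm_conj, norm_one] at this
    nlinarith [norm_nonneg b]
  have hna' : ‖a'‖ = 1 := by rw [ha', norm_inv, hna]; norm_num
  have hnb' : ‖b'‖ = 1 := by rw [hb', norm_inv, hnb]; norm_num
  -- geometric series
  have geom : ∀ u v : ℂ, ‖u‖ = 1 → ‖v‖ = 1 →
      HasSum (fun q : ℕ => u*v*((ρ:ℂ)*(u*v))^q) (u*v*(1-(ρ:ℂ)*(u*v))⁻¹) := by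
    intro u v hu hv
    have hnorm : ‖(ρ:ℂ)*(u*v)‖ < 1 := by
      rw [norm_mul, norm_mul, hu, hv, Complex.norm_real, Real.norm_eq_abs,
        abs_of_nonneg hρ0]
      simpa using hρ1
    exact (hasSum_geometric_of_norm_lt_one hnorm).mul_left _
  have nz : ∀ u v : ℂ, ‖u‖ = 1 → ‖v‖ = 1 → 1 - (ρ:ℂ)*(u*v) ≠ 0 := by
    intro u v hu hv h
    have h2 : (ρ:ℂ)*(u*v) = 1 := by linear_combination -h
    have := congrArg norm h2
    rw [norm_mul, norm_mul, hu, hv, Complex.norm_real, Real.norm_eq_abs,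
      abs_of_nonneg hρ0, norm_one] at this
    norm_num at this
    linarith
  -- four geometric series
  have G1 := geom a b hna hnb
  have G2 := geom a b' hna hnb'
  have G3 := geom a' b hna' hnb
  have G4 := geom a' b' hna' hnb'
  have H := ((G1.sub G2).sub G3).add G4
  set C : ℂ := (a - a')*(b - b') with hC_def
  have hCa : a - a' ≠ 0 := by
    simp only [ha_def, ha'_def]
    intro h
    have h2 : (2*s:ℂ)*Complex.I = 0 := by linear_combination h
    simp [Complex.I_ne_zero] at h2
    exact hs_pos.ne' (by exact_mod_cast h2)
  have hCb : b - b' ≠ 0 := by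
    simp only [hb_def, hb'_def]
    intro h
    have h2 : (2*t:ℂ)*Complex.I = 0 := by linear_combination h
    simp [Complex.I_ne_zero] at h2
    exact ht_pos.ne' (by exact_mod_cast h2)
  have hC : C ≠ 0 := mul_ne_zero hCa hCb
  have hfun : (fun q : ℕ => a*b*((ρ:ℂ)*(a*b))^q - a*b'*((ρ:ℂ)*(a*b'))^q
        - a'*b*((ρ:ℂ)*(a'*b))^q + a'*b'*((ρ:ℂ)*(a'*b'))^q)
      = fun q : ℕ => ((Ut q x * Ut q y * ρ^q : ℝ) : ℂ) * C := by
    funext q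
    have e1 := Ut_complex x s hs2 q
    have e2 := Ut_complex y t ht2 q
    rw [← ha_def, ← ha'_def] at e1
    rw [← hb_def, ← hb'_def] at e2
    push_cast
    simp only [mul_pow, hC_def]
    linear_combination (-((ρ:ℂ)^q * (b^(q+1) - b'^(q+1)))) * e1
      + (-((ρ:ℂ)^q * ((Ut q x:ℂ) * (a - a')))) * e2
  rw [hfun] at H
  set V : ℂ := a*b*(1-(ρ:ℂ)*(a*b))⁻¹ - a*b'*(1-(ρ:ℂ)*(a*b'))⁻¹
      - a'*b*(1-(ρ:ℂ)*(a'*b))⁻¹ + a'*b'*(1-(ρ:ℂ)*(a'*b'))⁻¹ with hV_def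
  have H2 : HasSum (fun q : ℕ => ((Ut q x * Ut q y * ρ^q : ℝ):ℂ)) (V/C) := by
    have h3 := H.div_const C
    simpa only [mul_div_cancel_right₀ _ hC] using h3
  have h1 := nz a b hna hnb
  have h2 := nz a b' hna hnb'
  have h3 := nz a' b hna' hnb
  have h4 := nz a' b' hna' hnb'
  have hxa : (x:ℂ) = (a + a')/2 := by simp only [ha_def, ha'_def]; ring
  have hyb : (y:ℂ) = (b + b')/2 := by simp only [hb_def, hb'_def]; ring
  have hD : ((4*ρ^2*(x^2+y^2) - 4*x*y*ρ*(1+ρ^2) + 1 - 2*ρ^2 + ρ^4 : ℝ) : ℂ)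
      = (1-(ρ:ℂ)*(a*b))*(1-(ρ:ℂ)*(a*b'))*(1-(ρ:ℂ)*(a'*b))*(1-(ρ:ℂ)*(a'*b')) := by
    push_cast
    rw [hxa, hyb, ha', hb']
    field_simp
    ring
  have hkey := key a b ρ ha0 hb0 h1 (by rwa [← hb']) (by rwa [← ha'])
    (by rwa [← ha', ← hb']) (by rwa [← ha']) (by rwa [← hb'])
  rw [← ha', ← hb'] at hkey
  have hval : ((((1 - ρ^2) / (4*ρ^2*(x^2+y^2) - 4*x*y*ρ*(1+ρ^2) + 1 - 2*ρ^2 + ρ^4) : ℝ)):ℂ)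
      = V / C := by
    rw [Complex.ofReal_div, hD, hV_def, hC_def]
    push_cast
    exact hkey.symm
  rw [← hval] at H2
  exact Complex.hasSum_ofReal.mp H2
end

section
/- Let U be an n×n real orthogonal matrix, λ₁,...,λₙ real numbers, and f: ℝ → ℝ. With V_{k,h}^{i,j} as above, define Π_{k,h}^{p,q}[f] = Σ_{i≠j} ((f(λ_i) - f(λ_j))/(λ_i - λ_j)) V_{k,h}^{i,j} V_{p,q}^{i,j} (assuming λ_i ≠ λ_j for i ≠ j). Then Σ_{k ≤ h} Σ_{p ≤ q} (Π_{k,h}^{p,q}[f])² = 2 Σ_{i ≠ j} ((f(λ_i) - f(λ_j))/(λ_i - λ_j))². -/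
open Finset

lemma fac4 {ι : Type*} [Fintype ι] (p q r s t u v w : ι → ℝ) :
    (∑ k : ι, ∑ h : ι, (p k * q h + r k * s h + t k * u h + v k * w h))
      = (∑ k : ι, p k) * (∑ h : ι, q h) + (∑ k : ι, r k) * (∑ h : ι, s h)
        + (∑ k : ι, t k) * (∑ h : ι, u h) + (∑ k : ι, v k) * (∑ h : ι, w h) := by
  simp only [Finset.sum_add_distrib, ← Finset.mul_sum, ← Finset.sum_mul]

lemma fact2 {ι κ : Type*} [Fintype ι] [Fintype κ] (K : ℝ) (g : ι → ℝ) (h : κ → ℝ) :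
    (∑ A : ι, ∑ B : κ, K * g A * h B) = K * (∑ A : ι, g A) * (∑ B : κ, h B) := by
  simp only [mul_assoc, ← Finset.mul_sum, ← Finset.sum_mul]

lemma swap4 {α β : Type*} [Fintype α] [Fintype β] (F : α → α → β → β → ℝ) :
    (∑ A : α, ∑ B : α, ∑ a : β, ∑ b : β, F A B a b)
      = ∑ a : β, ∑ b : β, ∑ A : α, ∑ B : α, F A B a b := by
  rw [show (∑ A : α, ∑ B : α, ∑ a : β, ∑ b : β, F A B a b)
      = ∑ A : α, ∑ a : β, ∑ b : β, ∑ B : α, F A B a b from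
    Finset.sum_congr rfl fun A _ => by
      rw [Finset.sum_comm]
      exact Finset.sum_congr rfl fun a _ => Finset.sum_comm]
  rw [Finset.sum_comm]
  refine Finset.sum_congr rfl fun a _ => ?_
  rw [Finset.sum_comm]

lemma point_aux {g : Type*} [DecidableEq g] (c : g → g → ℝ) (hd : ∀ i, c i i = 0)
    (hs : ∀ i j, c i j = c j i) (a1 a2 b1 b2 : g) :
    (c a1 a2 * c b1 b2)
      * ((if a1 = b1 then (1:ℝ) else 0) * (if a2 = b2 then 1 else 0)
        + (if a1 = b2 then (1:ℝ) else 0) * (if a2 = b1 then 1 else 0))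
      * ((if a1 = b1 then (1:ℝ) else 0) * (if a2 = b2 then 1 else 0)
        + (if a1 = b2 then (1:ℝ) else 0) * (if a2 = b1 then 1 else 0))
    = (if (b1, b2) = (a1, a2) then (c a1 a2)^2 else 0)
      + (if (b1, b2) = (a2, a1) then (c a1 a2)^2 else 0) := by
  simp only [Prod.mk.injEq]
  by_cases e11 : a1 = b1 <;> by_cases e22 : a2 = b2 <;>
    by_cases e12 : a1 = b2 <;> by_cases e21 : a2 = b1 <;>
    simp_all [eq_comm] <;>
    first
      | linear_combination (c a1 a2) * (hs a1 a2)
      | linear_combination (c a1 a2) * (hs a2 a1)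
      | ring

set_option maxHeartbeats 1000000 in
/-- If `U` is an `n×n` real orthogonal matrix, `λ₁,…,λₙ` are pairwise distinct reals,
`f : ℝ → ℝ`, and
`Π_{k,h}^{p,q}[f] = ∑_{i≠j} ((f(λ_i)-f(λ_j))/(λ_i-λ_j)) V_{k,h}^{i,j} V_{p,q}^{i,j}`,
then `∑_{k≤h} ∑_{p≤q} (Π_{k,h}^{p,q}[f])² = 2 ∑_{i≠j} ((f(λ_i)-f(λ_j))/(λ_i-λ_j))²`. -/
theorem stmt9 (n : ℕ) (U : Matrix (Fin n) (Fin n) ℝ) (hU : U * U.transpose = 1)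
    (lam : Fin n → ℝ) (hlam : Function.Injective lam) (f : ℝ → ℝ)
    (V : Fin n → Fin n → Fin n → Fin n → ℝ)
    (hV : ∀ k h i j, V k h i j =
      if k = h then Real.sqrt 2 * U k i * U k j
      else U k i * U h j + U h i * U k j)
    (Pi' : Fin n → Fin n → Fin n → Fin n → ℝ)
    (hPi : ∀ k h p q, Pi' k h p q = ∑ i : Fin n, ∑ j : Fin n,
      if i ≠ j then ((f (lam i) - f (lam j)) / (lam i - lam j)) * V k h i j * V p q i j
      else 0) :
    (∑ k : Fin n, ∑ h : Fin n, ∑ p : Fin n, ∑ q : Fin n,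
        if k ≤ h ∧ p ≤ q then (Pi' k h p q) ^ 2 else 0)
      = 2 * ∑ i : Fin n, ∑ j : Fin n,
          if i ≠ j then ((f (lam i) - f (lam j)) / (lam i - lam j)) ^ 2 else 0 := by
  classical
  have hUtU : U.transpose * U = 1 := mul_eq_one_comm.mp hU
  have hA : ∀ i i' : Fin n, (∑ k : Fin n, U k i * U k i') = if i = i' then (1:ℝ) else 0 := by
    intro i i'
    have h1 := congrFun (congrFun hUtU i) i'
    simpa [Matrix.mul_apply, Matrix.transpose_apply, Matrix.one_apply] using h1
  set c : Fin n → Fin n → ℝ :=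
    fun i j => if i ≠ j then (f (lam i) - f (lam j)) / (lam i - lam j) else 0 with hc
  have hcdiag : ∀ i, c i i = 0 := by intro i; simp [hc]
  have hcsymm : ∀ i j, c i j = c j i := by
    intro i j
    by_cases hij : i = j
    · simp [hij]
    · simp only [hc, if_neg, hij, Ne.symm hij, ne_eq, not_false_eq_true, if_true]
      rw [← neg_div_neg_eq]; ring_nf
  have hsq2 : Real.sqrt 2 * Real.sqrt 2 = 2 := Real.mul_self_sqrt (by norm_num)
  -- key orthogonality of the V system
  have hS : ∀ i j i' j' : Fin n,
      (∑ k : Fin n, ∑ h : Fin n, if k ≤ h then V k h i j * V k h i' j' else 0)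
      = (if i = i' then (1:ℝ) else 0) * (if j = j' then 1 else 0)
        + (if i = j' then (1:ℝ) else 0) * (if j = i' then 1 else 0) := by
    intro i j i' j'
    have key : 2 * (∑ k : Fin n, ∑ h : Fin n, if k ≤ h then V k h i j * V k h i' j' else 0)
        = ∑ k : Fin n, ∑ h : Fin n,
            (U k i * U h j + U h i * U k j) * (U k i' * U h j' + U h i' * U k j') := by
      rw [two_mul]
      nth_rewrite 2 [Finset.sum_comm]
      rw [← Finset.sum_add_distrib]
      refine Finset.sum_congr rfl fun k _ => ?_
      rw [← Finset.sum_add_distrib]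
      refine Finset.sum_congr rfl fun h _ => ?_
      rcases lt_trichotomy k h with hkh | hkh | hkh
      · rw [if_pos hkh.le, if_neg (not_le.mpr hkh), hV, hV, if_neg hkh.ne, if_neg hkh.ne]
        ring
      · subst hkh
        rw [if_pos le_rfl, hV, hV, if_pos rfl, if_pos rfl]
        linear_combination (2 * (U k i * U k j * U k i' * U k j')) * hsq2
      · rw [if_neg (not_le.mpr hkh), if_pos hkh.le, hV, hV, if_neg hkh.ne, if_neg hkh.ne]
        ring
    have expand : (∑ k : Fin n, ∑ h : Fin n,
            (U k i * U h j + U h i * U k j) * (U k i' * U h j' + U h i' * U k j'))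
        = 2 * ((if i = i' then (1:ℝ) else 0) * (if j = j' then 1 else 0)
          + (if i = j' then (1:ℝ) else 0) * (if j = i' then 1 else 0)) := by
      have step : (∑ k : Fin n, ∑ h : Fin n,
            (U k i * U h j + U h i * U k j) * (U k i' * U h j' + U h i' * U k j'))
          = ∑ k : Fin n, ∑ h : Fin n,
            ((U k i * U k i') * (U h j * U h j') + (U k i * U k j') * (U h j * U h i')
              + (U k j * U k i') * (U h i * U h j') + (U k j * U k j') * (U h i * U h i')) := by
        exact Finset.sum_congr rfl fun k _ => Finset.sum_congr rfl fun h _ => by ring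
      rw [step, fac4, hA, hA, hA, hA]
      ring
    have := key.trans expand
    linarith
  have hPi2 : ∀ k h p q, Pi' k h p q
      = ∑ i : Fin n, ∑ j : Fin n, c i j * (V k h i j * V p q i j) := by
    intro k h p q
    rw [hPi]
    refine Finset.sum_congr rfl fun i _ => Finset.sum_congr rfl fun j _ => ?_
    by_cases hij : i = j <;> simp [hc, hij, mul_assoc]
  have hS' : ∀ a b : Fin n × Fin n,
      (∑ A : Fin n × Fin n, (if A.1 ≤ A.2 then (1:ℝ) else 0)
          * (V A.1 A.2 a.1 a.2 * V A.1 A.2 b.1 b.2))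
      = (if a.1 = b.1 then (1:ℝ) else 0) * (if a.2 = b.2 then 1 else 0)
        + (if a.1 = b.2 then (1:ℝ) else 0) * (if a.2 = b.1 then 1 else 0) := by
    intro a b
    rw [Fintype.sum_prod_type, ← hS a.1 a.2 b.1 b.2]
    refine Finset.sum_congr rfl fun k _ => Finset.sum_congr rfl fun h _ => ?_
    by_cases hkh : k ≤ h <;> simp [hkh]
  calc (∑ k : Fin n, ∑ h : Fin n, ∑ p : Fin n, ∑ q : Fin n,
        if k ≤ h ∧ p ≤ q then (Pi' k h p q) ^ 2 else 0)
      = ∑ k : Fin n, ∑ h : Fin n, ∑ p : Fin n, ∑ q : Fin n,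
          (if k ≤ h then (1:ℝ) else 0) * ((if p ≤ q then (1:ℝ) else 0) *
            ((∑ i : Fin n, ∑ j : Fin n, c i j * (V k h i j * V p q i j))
              * (∑ i : Fin n, ∑ j : Fin n, c i j * (V k h i j * V p q i j)))) := by
        refine Finset.sum_congr rfl fun k _ => Finset.sum_congr rfl fun h _ =>
          Finset.sum_congr rfl fun p _ => Finset.sum_congr rfl fun q _ => ?_
        rw [hPi2 k h p q]
        by_cases h1 : k ≤ h <;> by_cases h2 : p ≤ q <;> simp [h1, h2, sq]
    _ = ∑ A : Fin n × Fin n, ∑ B : Fin n × Fin n,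
          (if A.1 ≤ A.2 then (1:ℝ) else 0) * ((if B.1 ≤ B.2 then (1:ℝ) else 0) *
            ((∑ a : Fin n × Fin n, c a.1 a.2 * (V A.1 A.2 a.1 a.2 * V B.1 B.2 a.1 a.2))
              * (∑ b : Fin n × Fin n, c b.1 b.2 * (V A.1 A.2 b.1 b.2 * V B.1 B.2 b.1 b.2)))) := by
        simp only [Fintype.sum_prod_type]
    _ = ∑ A : Fin n × Fin n, ∑ B : Fin n × Fin n, ∑ a : Fin n × Fin n, ∑ b : Fin n × Fin n,
          (c a.1 a.2 * c b.1 b.2)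
            * ((if A.1 ≤ A.2 then (1:ℝ) else 0) * (V A.1 A.2 a.1 a.2 * V A.1 A.2 b.1 b.2))
            * ((if B.1 ≤ B.2 then (1:ℝ) else 0) * (V B.1 B.2 a.1 a.2 * V B.1 B.2 b.1 b.2)) := by
        refine Finset.sum_congr rfl fun A _ => Finset.sum_congr rfl fun B _ => ?_
        rw [Finset.sum_mul_sum]
        simp only [Finset.mul_sum]
        exact Finset.sum_congr rfl fun a _ => Finset.sum_congr rfl fun b _ => by ring
    _ = ∑ a : Fin n × Fin n, ∑ b : Fin n × Fin n, ∑ A : Fin n × Fin n, ∑ B : Fin n × Fin n,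
          (c a.1 a.2 * c b.1 b.2)
            * ((if A.1 ≤ A.2 then (1:ℝ) else 0) * (V A.1 A.2 a.1 a.2 * V A.1 A.2 b.1 b.2))
            * ((if B.1 ≤ B.2 then (1:ℝ) else 0) * (V B.1 B.2 a.1 a.2 * V B.1 B.2 b.1 b.2)) :=
        swap4 _
    _ = ∑ a : Fin n × Fin n, ∑ b : Fin n × Fin n,
          (c a.1 a.2 * c b.1 b.2)
            * (∑ A : Fin n × Fin n, (if A.1 ≤ A.2 then (1:ℝ) else 0)
                * (V A.1 A.2 a.1 a.2 * V A.1 A.2 b.1 b.2))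
            * (∑ B : Fin n × Fin n, (if B.1 ≤ B.2 then (1:ℝ) else 0)
                * (V B.1 B.2 a.1 a.2 * V B.1 B.2 b.1 b.2)) := by
        refine Finset.sum_congr rfl fun a _ => Finset.sum_congr rfl fun b _ => ?_
        exact fact2 _ _ _
    _ = ∑ a : Fin n × Fin n, ∑ b : Fin n × Fin n,
          (c a.1 a.2 * c b.1 b.2)
            * ((if a.1 = b.1 then (1:ℝ) else 0) * (if a.2 = b.2 then 1 else 0)
              + (if a.1 = b.2 then (1:ℝ) else 0) * (if a.2 = b.1 then 1 else 0))
            * ((if a.1 = b.1 then (1:ℝ) else 0) * (if a.2 = b.2 then 1 else 0)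
              + (if a.1 = b.2 then (1:ℝ) else 0) * (if a.2 = b.1 then 1 else 0)) := by
        refine Finset.sum_congr rfl fun a _ => Finset.sum_congr rfl fun b _ => ?_
        rw [hS' a b]
    _ = ∑ a : Fin n × Fin n, 2 * (c a.1 a.2)^2 := by
        refine Finset.sum_congr rfl fun a _ => ?_
        have point : ∀ b : Fin n × Fin n,
            (c a.1 a.2 * c b.1 b.2)
              * ((if a.1 = b.1 then (1:ℝ) else 0) * (if a.2 = b.2 then 1 else 0)
                + (if a.1 = b.2 then (1:ℝ) else 0) * (if a.2 = b.1 then 1 else 0))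
              * ((if a.1 = b.1 then (1:ℝ) else 0) * (if a.2 = b.2 then 1 else 0)
                + (if a.1 = b.2 then (1:ℝ) else 0) * (if a.2 = b.1 then 1 else 0))
            = (if b = a then (c a.1 a.2)^2 else 0)
              + (if b = (a.2, a.1) then (c a.1 a.2)^2 else 0) := by
          intro b
          have := point_aux c hcdiag hcsymm a.1 a.2 b.1 b.2
          simpa using this
        rw [Finset.sum_congr rfl fun b _ => point b, Finset.sum_add_distrib,
          Finset.sum_ite_eq' Finset.univ a (fun _ => (c a.1 a.2)^2),
          Finset.sum_ite_eq' Finset.univ (a.2, a.1) (fun _ => (c a.1 a.2)^2)]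
        simp
        ring
    _ = 2 * ∑ i : Fin n, ∑ j : Fin n,
          if i ≠ j then ((f (lam i) - f (lam j)) / (lam i - lam j)) ^ 2 else 0 := by
        rw [Fintype.sum_prod_type]
        simp only [← Finset.mul_sum]
        congr 1
        refine Finset.sum_congr rfl fun i _ => Finset.sum_congr rfl fun j _ => ?_
        by_cases hij : i = j <;> simp [hc, hij]
end

section
/- Let U be an n×n real orthogonal matrix, λ₁,...,λₙ real numbers, and f: ℝ → ℝ. With V and Ψ as above, define Ψ_{k,h}^{p,q}[f] = Σ_{i=1}^n f(λ_i) V_{k,h}^{i,i} V_{p,q}^{i,i}. Then Σ_{k≤h} Σ_{p≤q} (Ψ_{k,h}^{p,q}[f])² = 4 Σ_{i=1}^n f(λ_i)². -/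
/-- If `U` is an `n×n` real orthogonal matrix, `λ₁,…,λₙ ∈ ℝ`, `f : ℝ → ℝ`, and
`Ψ_{k,h}^{p,q}[f] = ∑_i f(λ_i) V_{k,h}^{i,i} V_{p,q}^{i,i}`, then
`∑_{k≤h} ∑_{p≤q} (Ψ_{k,h}^{p,q}[f])² = 4 ∑_i f(λ_i)²`. -/
theorem stmt10 (n : ℕ) (U : Matrix (Fin n) (Fin n) ℝ) (hU : U * U.transpose = 1)
    (lam : Fin n → ℝ) (f : ℝ → ℝ)
    (V : Fin n → Fin n → Fin n → Fin n → ℝ)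
    (hV : ∀ k h i j, V k h i j =
      if k = h then Real.sqrt 2 * U k i * U k j
      else U k i * U h j + U h i * U k j)
    (Ψ : Fin n → Fin n → Fin n → Fin n → ℝ)
    (hΨ : ∀ k h p q, Ψ k h p q = ∑ i : Fin n, f (lam i) * V k h i i * V p q i i) :
    (∑ k : Fin n, ∑ h : Fin n, ∑ p : Fin n, ∑ q : Fin n,
        if k ≤ h ∧ p ≤ q then (Ψ k h p q) ^ 2 else 0)
      = 4 * ∑ i : Fin n, f (lam i) ^ 2 := by
  classical
  have hcol : ∀ i j, (∑ k, U k i * U k j) = if i = j then (1:ℝ) else 0 := by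
    have hUt : U.transpose * U = 1 := mul_eq_one_comm.mp hU
    intro i j
    have := congrFun (congrFun hUt i) j
    simpa [Matrix.mul_apply, Matrix.transpose_apply, Matrix.one_apply] using this
  set W : Fin n → Fin n → Fin n → ℝ := fun i k h => if k ≤ h then V k h i i else 0 with hWdef
  -- Gram identity
  have hg : ∀ i j, (∑ k, ∑ h, W i k h * W j k h) = if i = j then (2:ℝ) else 0 := by
    intro i j
    have hpt : ∀ k h : Fin n, W i k h * W j k h + W i h k * W j h k
        = 4 * (U k i * U k j) * (U h i * U h j) := by
      intro k h
      have hs : Real.sqrt 2 * Real.sqrt 2 = 2 := Real.mul_self_sqrt (by norm_num)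
      rcases lt_trichotomy k h with hlt | heq | hgt
      · simp only [hWdef, hV, if_pos hlt.le, if_neg (not_le.mpr hlt), if_neg hlt.ne]
        ring
      · subst heq
        simp only [hWdef, hV, if_pos le_rfl, if_pos rfl, if_true]
        linear_combination (2 * (U k i * U k i * U k j * U k j)) * hs
      · simp only [hWdef, hV, if_pos hgt.le, if_neg (not_le.mpr hgt), if_neg hgt.ne]
        ring
    have hdouble : (∑ k, ∑ h, W i k h * W j k h) + (∑ k, ∑ h, W i k h * W j k h)
        = ∑ k, ∑ h, (4 * (U k i * U k j) * (U h i * U h j)) := by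
      have hswap : (∑ k, ∑ h, W i k h * W j k h) = ∑ k, ∑ h, W i h k * W j h k :=
        Finset.sum_comm
      rw (occs := .pos [2]) [hswap]
      rw [← Finset.sum_add_distrib]
      refine Finset.sum_congr rfl fun k _ => ?_
      rw [← Finset.sum_add_distrib]
      exact Finset.sum_congr rfl fun h _ => hpt k h
    have hfac : (∑ k, ∑ h, (4 * (U k i * U k j) * (U h i * U h j)))
        = 4 * ((if i = j then (1:ℝ) else 0) * (if i = j then (1:ℝ) else 0)) := by
      have h1 : (∑ k, ∑ h, (4 * (U k i * U k j) * (U h i * U h j)))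
          = ∑ k, (4 * (U k i * U k j)) * (∑ h, U h i * U h j) := by
        refine Finset.sum_congr rfl fun k _ => ?_
        rw [Finset.mul_sum]
      rw [h1, ← Finset.sum_mul, ← Finset.mul_sum, hcol]
      ring
    rw [hfac] at hdouble
    by_cases hij : i = j <;> simp [hij] at hdouble ⊢ <;> linarith
  -- generic swap of two inner indices to the front
  have swap4 : ∀ (F : Fin n → Fin n → Fin n → Fin n → ℝ),
      (∑ p : Fin n, ∑ q : Fin n, ∑ i : Fin n, ∑ j : Fin n, F p q i j)
        = ∑ i : Fin n, ∑ j : Fin n, ∑ p : Fin n, ∑ q : Fin n, F p q i j := by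
    intro F
    calc (∑ p : Fin n, ∑ q : Fin n, ∑ i : Fin n, ∑ j : Fin n, F p q i j)
        = ∑ p : Fin n, ∑ i : Fin n, ∑ q : Fin n, ∑ j : Fin n, F p q i j :=
          Finset.sum_congr rfl fun p _ => Finset.sum_comm
      _ = ∑ i : Fin n, ∑ p : Fin n, ∑ q : Fin n, ∑ j : Fin n, F p q i j := Finset.sum_comm
      _ = ∑ i : Fin n, ∑ p : Fin n, ∑ j : Fin n, ∑ q : Fin n, F p q i j :=
          Finset.sum_congr rfl fun i _ => Finset.sum_congr rfl fun p _ => Finset.sum_comm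
      _ = ∑ i : Fin n, ∑ j : Fin n, ∑ p : Fin n, ∑ q : Fin n, F p q i j :=
          Finset.sum_congr rfl fun i _ => Finset.sum_comm
  have swap3 : ∀ (F : Fin n → Fin n → Fin n → ℝ),
      (∑ k : Fin n, ∑ h : Fin n, ∑ i : Fin n, F k h i)
        = ∑ i : Fin n, ∑ k : Fin n, ∑ h : Fin n, F k h i := by
    intro F
    calc (∑ k : Fin n, ∑ h : Fin n, ∑ i : Fin n, F k h i)
        = ∑ k : Fin n, ∑ i : Fin n, ∑ h : Fin n, F k h i :=
          Finset.sum_congr rfl fun k _ => Finset.sum_comm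
      _ = ∑ i : Fin n, ∑ k : Fin n, ∑ h : Fin n, F k h i := Finset.sum_comm
  calc (∑ k : Fin n, ∑ h : Fin n, ∑ p : Fin n, ∑ q : Fin n,
        if k ≤ h ∧ p ≤ q then (Ψ k h p q) ^ 2 else 0)
      = ∑ k : Fin n, ∑ h : Fin n, ∑ p : Fin n, ∑ q : Fin n,
          (∑ i : Fin n, f (lam i) * W i k h * W i p q) ^ 2 := by
        refine Finset.sum_congr rfl fun k _ => Finset.sum_congr rfl fun h _ =>
          Finset.sum_congr rfl fun p _ => Finset.sum_congr rfl fun q _ => ?_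
        by_cases h1 : k ≤ h <;> by_cases h2 : p ≤ q <;>
          simp [hWdef, h1, h2, hΨ]
    _ = ∑ k : Fin n, ∑ h : Fin n, ∑ p : Fin n, ∑ q : Fin n, ∑ i : Fin n, ∑ j : Fin n,
          (f (lam i) * W i k h * W i p q) * (f (lam j) * W j k h * W j p q) := by
        refine Finset.sum_congr rfl fun k _ => Finset.sum_congr rfl fun h _ =>
          Finset.sum_congr rfl fun p _ => Finset.sum_congr rfl fun q _ => ?_
        rw [sq, Finset.sum_mul_sum]
    _ = ∑ k : Fin n, ∑ h : Fin n, ∑ i : Fin n, ∑ j : Fin n,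
          (f (lam i) * f (lam j) * W i k h * W j k h) * (∑ p, ∑ q, W i p q * W j p q) := by
        refine Finset.sum_congr rfl fun k _ => Finset.sum_congr rfl fun h _ => ?_
        rw [swap4]
        refine Finset.sum_congr rfl fun i _ => Finset.sum_congr rfl fun j _ => ?_
        rw [Finset.mul_sum]
        refine Finset.sum_congr rfl fun p _ => ?_
        rw [Finset.mul_sum]
        exact Finset.sum_congr rfl fun q _ => by ring
    _ = ∑ k : Fin n, ∑ h : Fin n, ∑ i : Fin n,
          (f (lam i) * f (lam i) * W i k h * W i k h) * 2 := by
        refine Finset.sum_congr rfl fun k _ => Finset.sum_congr rfl fun h _ =>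
          Finset.sum_congr rfl fun i _ => ?_
        simp only [hg]
        simp [mul_ite, mul_zero, Finset.sum_ite_eq]
    _ = ∑ i : Fin n, (∑ k : Fin n, ∑ h : Fin n,
          (f (lam i) * f (lam i) * W i k h * W i k h) * 2) := swap3 _
    _ = ∑ i : Fin n, (f (lam i) * f (lam i) * 2) * 2 := by
        refine Finset.sum_congr rfl fun i _ => ?_
        have : (∑ k : Fin n, ∑ h : Fin n, (f (lam i) * f (lam i) * W i k h * W i k h) * 2)
            = (f (lam i) * f (lam i)) * (∑ k, ∑ h, W i k h * W i k h) * 2 := by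
          simp only [Finset.sum_mul, Finset.mul_sum]
          exact Finset.sum_congr rfl fun k _ => Finset.sum_congr rfl fun h _ => by ring
        rw [this, hg]
        simp
    _ = 4 * ∑ i : Fin n, f (lam i) ^ 2 := by
        rw [Finset.mul_sum]
        exact Finset.sum_congr rfl fun i _ => by ring
end
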